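/- Reduction → on FMC terms is confluent: if M →* N and M →* P, then there exists a term Q such that N →* Q and P →* Q. -/

import Mathlib

variable {Loc Ch : Type}

/-- FMC terms: variable, push `[N]a.M`, pop `a<x>.M` (de Bruijn binder),
choice `i`, case `M ; i -> N`, and loop `M^i`. -/
inductive Tm (Loc Ch : Type) : Type where
  | var : ℕ → Tm Loc Ch
  | push : Tm Loc Ch → Loc → Tm Loc Ch → Tm Loc Ch
  | pop : Loc → Tm Loc Ch → Tm Loc Ch
  | choice : Ch → Tm Loc Ch
  | caseOf : Tm Loc Ch → Ch → Tm Loc Ch → Tm Loc Ch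
  | loop : Tm Loc Ch → Ch → Tm Loc Ch

namespace Tm

/-- Shift the free de Bruijn indices `≥ d` up by one. -/
def lift : Tm Loc Ch → ℕ → Tm Loc Ch
  | var n, d => if n < d then var n else var (n + 1)
  | push N a M, d => push (N.lift d) a (M.lift d)
  | pop a M, d => pop a (M.lift (d + 1))
  | choice i, _ => choice i
  | caseOf M i N, d => caseOf (M.lift d) i (N.lift d)
  | loop M i, d => loop (M.lift d) i

/-- Capture-avoiding substitution `{N/k}M` for the de Bruijn index `k`. -/
def subst : Tm Loc Ch → ℕ → Tm Loc Ch → Tm Loc Ch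
  | var n, k, N => if n = k then N else if n < k then var n else var (n - 1)
  | push P a M, k, N => push (P.subst k N) a (M.subst k N)
  | pop a M, k, N => pop a (M.subst (k + 1) (N.lift 0))
  | choice i, _, _ => choice i
  | caseOf M i P, k, N => caseOf (M.subst k N) i (P.subst k N)
  | loop M i, k, N => loop (M.subst k N) i

end Tm

/-- Reduction: the closure under arbitrary contexts of the rules
beta, passage, select, reject, prefix(pop), prefix(push), associate, unroll. -/
inductive Step : Tm Loc Ch → Tm Loc Ch → Prop where
  | beta (N : Tm Loc Ch) (a : Loc) (M : Tm Loc Ch) :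
      Step (.push N a (.pop a M)) (M.subst 0 N)
  | passage (N : Tm Loc Ch) (a b : Loc) (M : Tm Loc Ch) (h : a ≠ b) :
      Step (.push N b (.pop a M)) (.pop a (.push (N.lift 0) b M))
  | select (i : Ch) (M : Tm Loc Ch) :
      Step (.caseOf (.choice i) i M) M
  | reject (i j : Ch) (M : Tm Loc Ch) (h : i ≠ j) :
      Step (.caseOf (.choice i) j M) (.choice i)
  | prefixPop (a : Loc) (N : Tm Loc Ch) (i : Ch) (M : Tm Loc Ch) :
      Step (.caseOf (.pop a N) i M) (.pop a (.caseOf N i (M.lift 0)))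
  | prefixPush (P : Tm Loc Ch) (a : Loc) (N : Tm Loc Ch) (i : Ch) (M : Tm Loc Ch) :
      Step (.caseOf (.push P a N) i M) (.push P a (.caseOf N i M))
  | assoc (P : Tm Loc Ch) (i : Ch) (N M : Tm Loc Ch) :
      Step (.caseOf (.caseOf P i N) i M) (.caseOf P i (.caseOf N i M))
  | unroll (M : Tm Loc Ch) (i : Ch) :
      Step (.loop M i) (.caseOf M i (.loop M i))
  | push_left (N N' : Tm Loc Ch) (a : Loc) (M : Tm Loc Ch) :
      Step N N' → Step (.push N a M) (.push N' a M)
  | push_right (N : Tm Loc Ch) (a : Loc) (M M' : Tm Loc Ch) :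
      Step M M' → Step (.push N a M) (.push N a M')
  | pop_body (a : Loc) (M M' : Tm Loc Ch) :
      Step M M' → Step (.pop a M) (.pop a M')
  | case_left (M M' : Tm Loc Ch) (i : Ch) (N : Tm Loc Ch) :
      Step M M' → Step (.caseOf M i N) (.caseOf M' i N)
  | case_right (M : Tm Loc Ch) (i : Ch) (N N' : Tm Loc Ch) :
      Step N N' → Step (.caseOf M i N) (.caseOf M i N')
  | loop_body (M M' : Tm Loc Ch) (i : Ch) :
      Step M M' → Step (.loop M i) (.loop M' i)

/-! ### de Bruijn lemmas -/

namespace Tm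

theorem lift_lift (M : Tm Loc Ch) : ∀ {d e : ℕ}, d ≤ e →
    (M.lift d).lift (e + 1) = (M.lift e).lift d := by
  induction M with
  | var n =>
      intro d e h
      simp only [lift]
      split_ifs <;> (try simp only [lift] ) <;> (try split_ifs) <;>
        simp only [Tm.var.injEq] <;> omega
  | push N a M ihN ihM => intro d e h; simp only [lift, ihN h, ihM h]
  | pop a M ih =>
      intro d e h
      simp only [lift]
      rw [ih (Nat.succ_le_succ h)]
  | choice i => intro d e h; simp only [lift]
  | caseOf M i N ihM ihN => intro d e h; simp only [lift, ihM h, ihN h]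
  | loop M i ih => intro d e h; simp only [lift, ih h]

theorem lift_subst_low (M : Tm Loc Ch) : ∀ (N : Tm Loc Ch) {d k : ℕ}, d ≤ k →
    (M.subst k N).lift d = (M.lift d).subst (k + 1) (N.lift d) := by
  induction M with
  | var n =>
      intro N d k h
      simp only [subst, lift]
      split_ifs <;> (try simp only [subst, lift] ) <;> (try split_ifs) <;>
        first
        | rfl
        | (simp only [Tm.var.injEq]; omega)
        | omega
  | push P a M ihP ihM => intro N d k h; simp only [subst, lift, ihP N h, ihM N h]
  | pop a M ih =>
      intro N d k h
      simp only [subst, lift]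
      rw [ih (N.lift 0) (Nat.succ_le_succ h), lift_lift N (Nat.zero_le d)]
  | choice i => intro N d k h; simp only [subst, lift]
  | caseOf M i P ihM ihP => intro N d k h; simp only [subst, lift, ihM N h, ihP N h]
  | loop M i ih => intro N d k h; simp only [subst, lift, ih N h]

theorem lift_subst_high (M : Tm Loc Ch) : ∀ (N : Tm Loc Ch) {k d : ℕ}, k ≤ d →
    (M.subst k N).lift d = (M.lift (d + 1)).subst k (N.lift d) := by
  induction M with
  | var n =>
      intro N k d h
      simp only [subst, lift]
      split_ifs <;> (try simp only [subst, lift] ) <;> (try split_ifs) <;>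
        first
        | rfl
        | (simp only [Tm.var.injEq]; omega)
        | omega
  | push P a M ihP ihM => intro N k d h; simp only [subst, lift, ihP N h, ihM N h]
  | pop a M ih =>
      intro N k d h
      simp only [subst, lift]
      rw [ih (N.lift 0) (Nat.succ_le_succ h), lift_lift N (Nat.zero_le d)]
  | choice i => intro N k d h; simp only [subst, lift]
  | caseOf M i P ihM ihP => intro N k d h; simp only [subst, lift, ihM N h, ihP N h]
  | loop M i ih => intro N k d h; simp only [subst, lift, ih N h]

theorem subst_lift (M : Tm Loc Ch) : ∀ (N : Tm Loc Ch) (d : ℕ),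
    (M.lift d).subst d N = M := by
  induction M with
  | var n =>
      intro N d
      simp only [lift]
      split_ifs <;> (try simp only [subst] ) <;> (try split_ifs) <;>
        first
        | rfl
        | (simp only [Tm.var.injEq]; omega)
        | omega
  | push P a M ihP ihM => intro N d; simp only [lift, subst, ihP, ihM]
  | pop a M ih => intro N d; simp only [lift, subst, ih]
  | choice i => intro N d; simp only [lift, subst]
  | caseOf M i P ihM ihP => intro N d; simp only [lift, subst, ihM, ihP]
  | loop M i ih => intro N d; simp only [lift, subst, ih]

theorem subst_subst (M : Tm Loc Ch) : ∀ (N P : Tm Loc Ch) {k j : ℕ}, k ≤ j →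
    (M.subst k N).subst j P = (M.subst (j + 1) (P.lift k)).subst k (N.subst j P) := by
  induction M with
  | var n =>
      intro N P k j h
      simp only [subst]
      split_ifs <;> (try simp only [subst]) <;> (try split_ifs) <;>
        first
        | rfl
        | (exact (subst_lift P (N.subst j P) k).symm)
        | (simp only [Tm.var.injEq]; omega)
        | omega
  | push Q a M ihQ ihM => intro N P k j h; simp only [subst, ihQ N P h, ihM N P h]
  | pop a M ih =>
      intro N P k j h
      simp only [subst]
      rw [ih (N.lift 0) (P.lift 0) (Nat.succ_le_succ h),
        lift_lift P (Nat.zero_le k), lift_subst_low N P (Nat.zero_le j)]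
  | choice i => intro N P k j h; simp only [subst]
  | caseOf M i Q ihM ihQ => intro N P k j h; simp only [subst, ihM N P h, ihQ N P h]
  | loop M i ih => intro N P k j h; simp only [subst, ih N P h]

end Tm

/-! ### Splitting the reduction into structural steps and beta/unroll steps -/

/-- Structural (permutation) steps: everything except beta and unroll. -/
inductive SStep : Tm Loc Ch → Tm Loc Ch → Prop where
  | passage (N : Tm Loc Ch) (a b : Loc) (M : Tm Loc Ch) (h : a ≠ b) :
      SStep (.push N b (.pop a M)) (.pop a (.push (N.lift 0) b M))
  | select (i : Ch) (M : Tm Loc Ch) :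
      SStep (.caseOf (.choice i) i M) M
  | reject (i j : Ch) (M : Tm Loc Ch) (h : i ≠ j) :
      SStep (.caseOf (.choice i) j M) (.choice i)
  | prefixPop (a : Loc) (N : Tm Loc Ch) (i : Ch) (M : Tm Loc Ch) :
      SStep (.caseOf (.pop a N) i M) (.pop a (.caseOf N i (M.lift 0)))
  | prefixPush (P : Tm Loc Ch) (a : Loc) (N : Tm Loc Ch) (i : Ch) (M : Tm Loc Ch) :
      SStep (.caseOf (.push P a N) i M) (.push P a (.caseOf N i M))
  | assoc (P : Tm Loc Ch) (i : Ch) (N M : Tm Loc Ch) :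
      SStep (.caseOf (.caseOf P i N) i M) (.caseOf P i (.caseOf N i M))
  | push_left (N N' : Tm Loc Ch) (a : Loc) (M : Tm Loc Ch) :
      SStep N N' → SStep (.push N a M) (.push N' a M)
  | push_right (N : Tm Loc Ch) (a : Loc) (M M' : Tm Loc Ch) :
      SStep M M' → SStep (.push N a M) (.push N a M')
  | pop_body (a : Loc) (M M' : Tm Loc Ch) :
      SStep M M' → SStep (.pop a M) (.pop a M')
  | case_left (M M' : Tm Loc Ch) (i : Ch) (N : Tm Loc Ch) :
      SStep M M' → SStep (.caseOf M i N) (.caseOf M' i N)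
  | case_right (M : Tm Loc Ch) (i : Ch) (N N' : Tm Loc Ch) :
      SStep N N' → SStep (.caseOf M i N) (.caseOf M i N')
  | loop_body (M M' : Tm Loc Ch) (i : Ch) :
      SStep M M' → SStep (.loop M i) (.loop M' i)

/-- Beta and unroll steps. -/
inductive BStep : Tm Loc Ch → Tm Loc Ch → Prop where
  | beta (N : Tm Loc Ch) (a : Loc) (M : Tm Loc Ch) :
      BStep (.push N a (.pop a M)) (M.subst 0 N)
  | unroll (M : Tm Loc Ch) (i : Ch) :
      BStep (.loop M i) (.caseOf M i (.loop M i))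
  | push_left (N N' : Tm Loc Ch) (a : Loc) (M : Tm Loc Ch) :
      BStep N N' → BStep (.push N a M) (.push N' a M)
  | push_right (N : Tm Loc Ch) (a : Loc) (M M' : Tm Loc Ch) :
      BStep M M' → BStep (.push N a M) (.push N a M')
  | pop_body (a : Loc) (M M' : Tm Loc Ch) :
      BStep M M' → BStep (.pop a M) (.pop a M')
  | case_left (M M' : Tm Loc Ch) (i : Ch) (N : Tm Loc Ch) :
      BStep M M' → BStep (.caseOf M i N) (.caseOf M' i N)
  | case_right (M : Tm Loc Ch) (i : Ch) (N N' : Tm Loc Ch) :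
      BStep N N' → BStep (.caseOf M i N) (.caseOf M i N')
  | loop_body (M M' : Tm Loc Ch) (i : Ch) :
      BStep M M' → BStep (.loop M i) (.loop M' i)

theorem sstep_step {M N : Tm Loc Ch} (h : SStep M N) : Step M N := by
  induction h with
  | passage N a b M h => exact .passage N a b M h
  | select i M => exact .select i M
  | reject i j M h => exact .reject i j M h
  | prefixPop a N i M => exact .prefixPop a N i M
  | prefixPush P a N i M => exact .prefixPush P a N i M
  | assoc P i N M => exact .assoc P i N M
  | push_left _ _ a M _ ih => exact .push_left _ _ a M ih
  | push_right N a _ _ _ ih => exact .push_right N a _ _ ih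
  | pop_body a _ _ _ ih => exact .pop_body a _ _ ih
  | case_left _ _ i N _ ih => exact .case_left _ _ i N ih
  | case_right M i _ _ _ ih => exact .case_right M i _ _ ih
  | loop_body _ _ i _ ih => exact .loop_body _ _ i ih

theorem bstep_step {M N : Tm Loc Ch} (h : BStep M N) : Step M N := by
  induction h with
  | beta N a M => exact .beta N a M
  | unroll M i => exact .unroll M i
  | push_left _ _ a M _ ih => exact .push_left _ _ a M ih
  | push_right N a _ _ _ ih => exact .push_right N a _ _ ih
  | pop_body a _ _ _ ih => exact .pop_body a _ _ ih
  | case_left _ _ i N _ ih => exact .case_left _ _ i N ih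
  | case_right M i _ _ _ ih => exact .case_right M i _ _ ih
  | loop_body _ _ i _ ih => exact .loop_body _ _ i ih

theorem step_classify {M N : Tm Loc Ch} (h : Step M N) : SStep M N ∨ BStep M N := by
  induction h with
  | beta N a M => exact Or.inr (.beta N a M)
  | passage N a b M h => exact Or.inl (.passage N a b M h)
  | select i M => exact Or.inl (.select i M)
  | reject i j M h => exact Or.inl (.reject i j M h)
  | prefixPop a N i M => exact Or.inl (.prefixPop a N i M)
  | prefixPush P a N i M => exact Or.inl (.prefixPush P a N i M)
  | assoc P i N M => exact Or.inl (.assoc P i N M)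
  | unroll M i => exact Or.inr (.unroll M i)
  | push_left _ _ a M _ ih =>
      cases ih with
      | inl h => exact Or.inl (.push_left _ _ a M h)
      | inr h => exact Or.inr (.push_left _ _ a M h)
  | push_right N a _ _ _ ih =>
      cases ih with
      | inl h => exact Or.inl (.push_right N a _ _ h)
      | inr h => exact Or.inr (.push_right N a _ _ h)
  | pop_body a _ _ _ ih =>
      cases ih with
      | inl h => exact Or.inl (.pop_body a _ _ h)
      | inr h => exact Or.inr (.pop_body a _ _ h)
  | case_left _ _ i N _ ih =>
      cases ih with
      | inl h => exact Or.inl (.case_left _ _ i N h)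
      | inr h => exact Or.inr (.case_left _ _ i N h)
  | case_right M i _ _ _ ih =>
      cases ih with
      | inl h => exact Or.inl (.case_right M i _ _ h)
      | inr h => exact Or.inr (.case_right M i _ _ h)
  | loop_body _ _ i _ ih =>
      cases ih with
      | inl h => exact Or.inl (.loop_body _ _ i h)
      | inr h => exact Or.inr (.loop_body _ _ i h)

/-! ### Star congruence lemmas -/

open Relation

theorem sred_push {N N' M M' : Tm Loc Ch} (a : Loc)
    (h1 : ReflTransGen SStep N N') (h2 : ReflTransGen SStep M M') :
    ReflTransGen SStep (.push N a M) (.push N' a M') := by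
  refine ReflTransGen.trans
    (ReflTransGen.lift (fun X => Tm.push X a M) (fun _ _ h => SStep.push_left _ _ a M h) _ _ h1)
    (ReflTransGen.lift (fun X => Tm.push N' a X) (fun _ _ h => SStep.push_right N' a _ _ h) _ _ h2)

theorem sred_pop {M M' : Tm Loc Ch} (a : Loc) (h : ReflTransGen SStep M M') :
    ReflTransGen SStep (.pop a M) (.pop a M') :=
  ReflTransGen.lift (fun X => Tm.pop a X) (fun _ _ h => SStep.pop_body a _ _ h) _ _ h

theorem sred_case {M M' N N' : Tm Loc Ch} (i : Ch)
    (h1 : ReflTransGen SStep M M') (h2 : ReflTransGen SStep N N') :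
    ReflTransGen SStep (.caseOf M i N) (.caseOf M' i N') := by
  refine ReflTransGen.trans
    (ReflTransGen.lift (fun X => Tm.caseOf X i N) (fun _ _ h => SStep.case_left _ _ i N h) _ _ h1)
    (ReflTransGen.lift (fun X => Tm.caseOf M' i X) (fun _ _ h => SStep.case_right M' i _ _ h) _ _ h2)

theorem sred_loop {M M' : Tm Loc Ch} (i : Ch) (h : ReflTransGen SStep M M') :
    ReflTransGen SStep (.loop M i) (.loop M' i) :=
  ReflTransGen.lift (fun X => Tm.loop X i) (fun _ _ h => SStep.loop_body _ _ i h) _ _ h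

theorem red_push {N N' M M' : Tm Loc Ch} (a : Loc)
    (h1 : ReflTransGen Step N N') (h2 : ReflTransGen Step M M') :
    ReflTransGen Step (.push N a M) (.push N' a M') := by
  refine ReflTransGen.trans
    (ReflTransGen.lift (fun X => Tm.push X a M) (fun _ _ h => Step.push_left _ _ a M h) _ _ h1)
    (ReflTransGen.lift (fun X => Tm.push N' a X) (fun _ _ h => Step.push_right N' a _ _ h) _ _ h2)

theorem red_pop {M M' : Tm Loc Ch} (a : Loc) (h : ReflTransGen Step M M') :
    ReflTransGen Step (.pop a M) (.pop a M') :=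
  ReflTransGen.lift (fun X => Tm.pop a X) (fun _ _ h => Step.pop_body a _ _ h) _ _ h

theorem red_case {M M' N N' : Tm Loc Ch} (i : Ch)
    (h1 : ReflTransGen Step M M') (h2 : ReflTransGen Step N N') :
    ReflTransGen Step (.caseOf M i N) (.caseOf M' i N') := by
  refine ReflTransGen.trans
    (ReflTransGen.lift (fun X => Tm.caseOf X i N) (fun _ _ h => Step.case_left _ _ i N h) _ _ h1)
    (ReflTransGen.lift (fun X => Tm.caseOf M' i X) (fun _ _ h => Step.case_right M' i _ _ h) _ _ h2)

theorem red_loop {M M' : Tm Loc Ch} (i : Ch) (h : ReflTransGen Step M M') :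
    ReflTransGen Step (.loop M i) (.loop M' i) :=
  ReflTransGen.lift (fun X => Tm.loop X i) (fun _ _ h => Step.loop_body _ _ i h) _ _ h

theorem sred_red {M N : Tm Loc Ch} (h : ReflTransGen SStep M N) :
    ReflTransGen Step M N :=
  ReflTransGen.mono (fun _ _ h => sstep_step h) _ _ h

/-! ### Structural normalization -/

open Classical in
/-- Push `push n a ·` through a pop-prefix (performing passages). -/
noncomputable def spush : Tm Loc Ch → Loc → Tm Loc Ch → Tm Loc Ch
  | n, a, .pop b m => if a = b then .push n a (.pop b m) else .pop b (spush (n.lift 0) a m)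
  | n, a, .var m => .push n a (.var m)
  | n, a, .push p c y => .push n a (.push p c y)
  | n, a, .choice j => .push n a (.choice j)
  | n, a, .caseOf p j y => .push n a (.caseOf p j y)
  | n, a, .loop m j => .push n a (.loop m j)

open Classical in
/-- Push `caseOf · i k` into a (normalized) scrutinee. -/
noncomputable def scase : Tm Loc Ch → Ch → Tm Loc Ch → Tm Loc Ch
  | .choice j, i, k => if j = i then k else .choice j
  | .pop b y, i, k => .pop b (scase y i (k.lift 0))
  | .push p c y, i, k => spush p c (scase y i k)
  | .caseOf p j y, i, k =>
      if j = i then .caseOf p i (scase y i k) else .caseOf (.caseOf p j y) i k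
  | .var n, i, k => .caseOf (.var n) i k
  | .loop m j, i, k => .caseOf (.loop m j) i k

/-- Structural normalization. -/
noncomputable def s : Tm Loc Ch → Tm Loc Ch
  | .var n => .var n
  | .choice i => .choice i
  | .pop a m => .pop a (s m)
  | .loop m i => .loop (s m) i
  | .push n a x => spush (s n) a (s x)
  | .caseOf x i k => scase (s x) i (s k)

theorem spush_lift (a : Loc) (x : Tm Loc Ch) : ∀ (n : Tm Loc Ch) (d : ℕ),
    (spush n a x).lift d = spush (n.lift d) a (x.lift d) := by
  induction x with
  | pop b y ih =>
      intro n d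
      by_cases hab : a = b
      · subst hab; simp [spush, Tm.lift]
      · simp only [spush, if_neg hab, Tm.lift, if_neg hab, ih]
        rw [Tm.lift_lift n (Nat.zero_le d)]
  | var m => intro n d; simp only [spush, Tm.lift]; split_ifs <;> simp [spush]
  | push p c y ihp ihy => intro n d; simp only [spush, Tm.lift]
  | choice j => intro n d; simp only [spush, Tm.lift]
  | caseOf p j y ihp ihy => intro n d; simp only [spush, Tm.lift]
  | loop m j ih => intro n d; simp only [spush, Tm.lift]

theorem scase_lift (i : Ch) (x : Tm Loc Ch) : ∀ (k : Tm Loc Ch) (d : ℕ),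
    (scase x i k).lift d = scase (x.lift d) i (k.lift d) := by
  induction x with
  | choice j =>
      intro k d
      by_cases hji : j = i
      · simp only [scase, if_pos hji, Tm.lift]
      · simp only [scase, if_neg hji, Tm.lift]
  | pop b y ih =>
      intro k d
      simp only [scase, Tm.lift, ih]
      rw [Tm.lift_lift k (Nat.zero_le d)]
  | push p c y ihp ihy =>
      intro k d
      simp only [scase, Tm.lift, spush_lift, ihy]
  | caseOf p j y ihp ihy =>
      intro k d
      by_cases hji : j = i
      · simp only [scase, if_pos hji, Tm.lift, ihy]
      · simp only [scase, if_neg hji, Tm.lift]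
  | var n => intro k d; simp only [scase, Tm.lift]; split_ifs <;> simp [scase]
  | loop m j ih => intro k d; simp only [scase, Tm.lift]

theorem s_lift (M : Tm Loc Ch) : ∀ (d : ℕ), (s M).lift d = s (M.lift d) := by
  induction M with
  | var n => intro d; simp only [s, Tm.lift]; split_ifs <;> simp [s]
  | choice i => intro d; simp only [s, Tm.lift]
  | pop a m ih => intro d; simp only [s, Tm.lift, ih]
  | loop m i ih => intro d; simp only [s, Tm.lift, ih]
  | push n a x ihn ihx => intro d; simp only [s, Tm.lift, spush_lift, ihn, ihx]
  | caseOf x i k ihx ihk => intro d; simp only [s, Tm.lift, scase_lift, ihx, ihk]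

theorem scase_spush (i : Ch) (a : Loc) (y : Tm Loc Ch) : ∀ (n k : Tm Loc Ch),
    scase (spush n a y) i k = spush n a (scase y i k) := by
  induction y with
  | pop b y0 ih =>
      intro n k
      by_cases hab : a = b
      · simp only [spush, if_pos hab, scase, spush, if_pos hab]
      · simp only [spush, if_neg hab, scase, ih]
  | var m => intro n k; simp only [spush, scase]
  | push p c y0 ihp ihy => intro n k; simp only [spush, scase]
  | choice j => intro n k; simp only [spush, scase]
  | caseOf p j y0 ihp ihy => intro n k; simp only [spush, scase]
  | loop m j ih => intro n k; simp only [spush, scase]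

theorem scase_assoc (i : Ch) (x : Tm Loc Ch) : ∀ (y k : Tm Loc Ch),
    scase (scase x i y) i k = scase x i (scase y i k) := by
  induction x with
  | choice j =>
      intro y k
      by_cases hji : j = i
      · simp only [scase, if_pos hji]
      · simp only [scase, if_neg hji]
  | pop b y0 ih =>
      intro y k
      simp only [scase, ih]
      rw [scase_lift]
  | push p c y0 ihp ihy =>
      intro y k
      simp only [scase, scase_spush, ihy]
  | caseOf p j y0 ihp ihy =>
      intro y k
      by_cases hji : j = i
      · subst hji; simp [scase, ihy]
      · simp [scase, hji]
  | var n => intro y k; simp [scase]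
  | loop m j ih => intro y k; simp [scase]

/-! ### The normalization is reachable by structural steps -/

theorem push_to_spush (a : Loc) (x : Tm Loc Ch) : ∀ (n : Tm Loc Ch),
    ReflTransGen SStep (.push n a x) (spush n a x) := by
  induction x with
  | pop b y ih =>
      intro n
      by_cases hab : a = b
      · subst hab; simp only [spush, if_pos rfl]; exact ReflTransGen.refl
      · simp only [spush, if_neg hab]
        exact ReflTransGen.head (SStep.passage n b a y (fun h => hab h.symm))
          (sred_pop b (ih (n.lift 0)))
  | var m => intro n; simp only [spush]; exact ReflTransGen.refl
  | push p c y ihp ihy => intro n; simp only [spush]; exact ReflTransGen.refl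
  | choice j => intro n; simp only [spush]; exact ReflTransGen.refl
  | caseOf p j y ihp ihy => intro n; simp only [spush]; exact ReflTransGen.refl
  | loop m j ih => intro n; simp only [spush]; exact ReflTransGen.refl

theorem case_to_scase (i : Ch) (x : Tm Loc Ch) : ∀ (k : Tm Loc Ch),
    ReflTransGen SStep (.caseOf x i k) (scase x i k) := by
  induction x with
  | choice j =>
      intro k
      by_cases hji : j = i
      · simp only [scase, if_pos hji]
        rw [hji]
        exact ReflTransGen.single (SStep.select i k)
      · simp only [scase, if_neg hji]
        exact ReflTransGen.single (SStep.reject j i k hji)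
  | pop b y ih =>
      intro k
      simp only [scase]
      exact ReflTransGen.head (SStep.prefixPop b y i k) (sred_pop b (ih (k.lift 0)))
  | push p c y ihp ihy =>
      intro k
      simp only [scase]
      exact ReflTransGen.head (SStep.prefixPush p c y i k)
        ((sred_push c ReflTransGen.refl (ihy k)).trans (push_to_spush c (scase y i k) p))
  | caseOf p j y ihp ihy =>
      intro k
      by_cases hji : j = i
      · simp only [scase, if_pos hji]
        rw [hji]
        exact ReflTransGen.head (SStep.assoc p i y k)
          (sred_case i ReflTransGen.refl (ihy k))
      · simp only [scase, if_neg hji]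
        exact ReflTransGen.refl
  | var n => intro k; simp only [scase]; exact ReflTransGen.refl
  | loop m j ih => intro k; simp only [scase]; exact ReflTransGen.refl

theorem toS (M : Tm Loc Ch) : ReflTransGen SStep M (s M) := by
  induction M with
  | var n => exact ReflTransGen.refl
  | choice i => exact ReflTransGen.refl
  | pop a m ih => exact sred_pop a ih
  | loop m i ih => exact sred_loop i ih
  | push n a x ihn ihx =>
      exact ((sred_push a ihn ihx).trans (push_to_spush a (s x) (s n)))
  | caseOf x i k ihx ihk =>
      exact ((sred_case i ihx ihk).trans (case_to_scase i (s x) (s k)))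

/-! ### Structural steps under lift and subst -/

theorem sstep_lift {M M' : Tm Loc Ch} (h : SStep M M') :
    ∀ (d : ℕ), SStep (M.lift d) (M'.lift d) := by
  induction h with
  | passage N a b M h =>
      intro d
      simp only [Tm.lift]
      rw [Tm.lift_lift N (Nat.zero_le d)]
      exact SStep.passage (N.lift d) a b (M.lift (d + 1)) h
  | select i M => intro d; simp only [Tm.lift]; exact SStep.select i (M.lift d)
  | reject i j M h => intro d; simp only [Tm.lift]; exact SStep.reject i j (M.lift d) h
  | prefixPop a N i M =>
      intro d
      simp only [Tm.lift]
      rw [Tm.lift_lift M (Nat.zero_le d)]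
      exact SStep.prefixPop a (N.lift (d + 1)) i (M.lift d)
  | prefixPush P a N i M => intro d; simp only [Tm.lift]; exact SStep.prefixPush _ a _ i _
  | assoc P i N M => intro d; simp only [Tm.lift]; exact SStep.assoc _ i _ _
  | push_left _ _ a M _ ih => intro d; simp only [Tm.lift]; exact SStep.push_left _ _ a _ (ih d)
  | push_right N a _ _ _ ih => intro d; simp only [Tm.lift]; exact SStep.push_right _ a _ _ (ih d)
  | pop_body a _ _ _ ih => intro d; simp only [Tm.lift]; exact SStep.pop_body a _ _ (ih (d + 1))
  | case_left _ _ i N _ ih => intro d; simp only [Tm.lift]; exact SStep.case_left _ _ i _ (ih d)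
  | case_right M i _ _ _ ih => intro d; simp only [Tm.lift]; exact SStep.case_right _ i _ _ (ih d)
  | loop_body _ _ i _ ih => intro d; simp only [Tm.lift]; exact SStep.loop_body _ _ i (ih d)

theorem sstep_subst {M M' : Tm Loc Ch} (h : SStep M M') :
    ∀ (k : ℕ) (N : Tm Loc Ch), SStep (M.subst k N) (M'.subst k N) := by
  induction h with
  | passage P a b M h =>
      intro k N
      simp only [Tm.subst]
      rw [← Tm.lift_subst_low P N (Nat.zero_le k)]
      exact SStep.passage _ a b _ h
  | select i M => intro k N; simp only [Tm.subst]; exact SStep.select i _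
  | reject i j M h => intro k N; simp only [Tm.subst]; exact SStep.reject i j _ h
  | prefixPop a P i M =>
      intro k N
      simp only [Tm.subst]
      rw [← Tm.lift_subst_low M N (Nat.zero_le k)]
      exact SStep.prefixPop a _ i _
  | prefixPush P a Q i M => intro k N; simp only [Tm.subst]; exact SStep.prefixPush _ a _ i _
  | assoc P i Q M => intro k N; simp only [Tm.subst]; exact SStep.assoc _ i _ _
  | push_left _ _ a M _ ih => intro k N; simp only [Tm.subst]; exact SStep.push_left _ _ a _ (ih k N)
  | push_right P a _ _ _ ih => intro k N; simp only [Tm.subst]; exact SStep.push_right _ a _ _ (ih k N)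
  | pop_body a _ _ _ ih => intro k N; simp only [Tm.subst]; exact SStep.pop_body a _ _ (ih (k + 1) (N.lift 0))
  | case_left _ _ i P _ ih => intro k N; simp only [Tm.subst]; exact SStep.case_left _ _ i _ (ih k N)
  | case_right M i _ _ _ ih => intro k N; simp only [Tm.subst]; exact SStep.case_right _ i _ _ (ih k N)
  | loop_body _ _ i _ ih => intro k N; simp only [Tm.subst]; exact SStep.loop_body _ _ i (ih k N)

theorem sred_subst_left {A B : Tm Loc Ch} (h : ReflTransGen SStep A B) (k : ℕ) (N : Tm Loc Ch) :
    ReflTransGen SStep (A.subst k N) (B.subst k N) :=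
  ReflTransGen.lift (fun X => X.subst k N) (fun _ _ hs => sstep_subst hs k N) _ _ h

theorem sred_lift {A B : Tm Loc Ch} (h : ReflTransGen SStep A B) (d : ℕ) :
    ReflTransGen SStep (A.lift d) (B.lift d) :=
  ReflTransGen.lift (fun X => X.lift d) (fun _ _ hs => sstep_lift hs d) _ _ h

theorem sred_subst_right (M : Tm Loc Ch) : ∀ {N N' : Tm Loc Ch} (k : ℕ),
    SStep N N' → ReflTransGen SStep (M.subst k N) (M.subst k N') := by
  induction M with
  | var n =>
      intro N N' k h
      simp only [Tm.subst]
      split_ifs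
      · exact ReflTransGen.single h
      · exact ReflTransGen.refl
      · exact ReflTransGen.refl
  | push P a M ihP ihM =>
      intro N N' k h
      simp only [Tm.subst]
      exact sred_push a (ihP k h) (ihM k h)
  | pop a M ih =>
      intro N N' k h
      simp only [Tm.subst]
      exact sred_pop a (ih (k + 1) (sstep_lift h 0))
  | choice i => intro N N' k h; simp only [Tm.subst]; exact ReflTransGen.refl
  | caseOf M i P ihM ihP =>
      intro N N' k h
      simp only [Tm.subst]
      exact sred_case i (ihM k h) (ihP k h)
  | loop M i ih =>
      intro N N' k h
      simp only [Tm.subst]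
      exact sred_loop i (ih k h)

/-! ### Structural steps do not change the normal form -/

theorem s_sstep {M N : Tm Loc Ch} (h : SStep M N) : s M = s N := by
  induction h with
  | passage N a b M h =>
      have hba : ¬ b = a := fun hh => h hh.symm
      simp only [s, spush, if_neg hba]
      rw [s_lift]
  | select i M => simp [s, scase]
  | reject i j M h =>
      have : ¬ i = j := h
      simp only [s, scase, if_neg this]
  | prefixPop a N i M => simp only [s, scase]; rw [s_lift]
  | prefixPush P a N i M => simp only [s, scase_spush]
  | assoc P i N M => simp only [s, scase, scase_assoc, if_pos rfl]
  | push_left _ _ a M _ ih => simp only [s, ih]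
  | push_right N a _ _ _ ih => simp only [s, ih]
  | pop_body a _ _ _ ih => simp only [s, ih]
  | case_left _ _ i N _ ih => simp only [s, ih]
  | case_right M i _ _ _ ih => simp only [s, ih]
  | loop_body _ _ i _ ih => simp only [s, ih]

theorem s_sred {M N : Tm Loc Ch} (h : ReflTransGen SStep M N) : s M = s N := by
  induction h with
  | refl => rfl
  | tail _ h2 ih => exact ih.trans (s_sstep h2)

theorem s_idem (M : Tm Loc Ch) : s (s M) = s M := (s_sred (toS M)).symm

theorem sred_subst_right_star (M : Tm Loc Ch) {N N' : Tm Loc Ch} (k : ℕ)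
    (h : ReflTransGen SStep N N') :
    ReflTransGen SStep (M.subst k N) (M.subst k N') := by
  induction h with
  | refl => exact ReflTransGen.refl
  | tail _ h2 ih => exact ih.trans (sred_subst_right M _ h2)

theorem s_subst (M N : Tm Loc Ch) (k : ℕ) :
    s (M.subst k N) = s ((s M).subst k (s N)) := by
  have h1 : ReflTransGen SStep (M.subst k N) ((s M).subst k N) :=
    sred_subst_left (toS M) k N
  have h2 : ReflTransGen SStep ((s M).subst k N) ((s M).subst k (s N)) :=
    sred_subst_right_star (s M) k (toS N)
  exact s_sred (h1.trans h2)

/-! ### Parallel beta/unroll reduction -/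

inductive ParB : Tm Loc Ch → Tm Loc Ch → Prop where
  | var (n : ℕ) : ParB (.var n) (.var n)
  | choice (i : Ch) : ParB (.choice i) (.choice i)
  | push {N N' : Tm Loc Ch} (a : Loc) {M M' : Tm Loc Ch} :
      ParB N N' → ParB M M' → ParB (.push N a M) (.push N' a M')
  | pop (a : Loc) {M M' : Tm Loc Ch} : ParB M M' → ParB (.pop a M) (.pop a M')
  | caseOf {M M' : Tm Loc Ch} (i : Ch) {N N' : Tm Loc Ch} :
      ParB M M' → ParB N N' → ParB (.caseOf M i N) (.caseOf M' i N')
  | loop {M M' : Tm Loc Ch} (i : Ch) : ParB M M' → ParB (.loop M i) (.loop M' i)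
  | beta {N N' : Tm Loc Ch} (a : Loc) {M M' : Tm Loc Ch} :
      ParB N N' → ParB M M' → ParB (.push N a (.pop a M)) (M'.subst 0 N')
  | unroll {M M' : Tm Loc Ch} (i : Ch) :
      ParB M M' → ParB (.loop M i) (.caseOf M' i (.loop M' i))

theorem ParB.refl (M : Tm Loc Ch) : ParB M M := by
  induction M with
  | var n => exact ParB.var n
  | choice i => exact ParB.choice i
  | push N a M ihN ihM => exact ParB.push a ihN ihM
  | pop a M ih => exact ParB.pop a ih
  | caseOf M i N ihM ihN => exact ParB.caseOf i ihM ihN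
  | loop M i ih => exact ParB.loop i ih

theorem parb_lift {M M' : Tm Loc Ch} (h : ParB M M') :
    ∀ (d : ℕ), ParB (M.lift d) (M'.lift d) := by
  induction h with
  | var n => intro d; simp only [Tm.lift]; split_ifs <;> constructor
  | choice i => intro d; exact ParB.choice i
  | push a _ _ ihN ihM => intro d; exact ParB.push a (ihN d) (ihM d)
  | pop a _ ih => intro d; exact ParB.pop a (ih (d + 1))
  | caseOf i _ _ ihM ihN => intro d; exact ParB.caseOf i (ihM d) (ihN d)
  | loop i _ ih => intro d; exact ParB.loop i (ih d)
  | @beta N N' a M M' _ _ ihN ihM =>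
      intro d
      simp only [Tm.lift]
      rw [Tm.lift_subst_high M' N' (Nat.zero_le d)]
      exact ParB.beta a (ihN d) (ihM (d + 1))
  | unroll i _ ih => intro d; simp only [Tm.lift]; exact ParB.unroll i (ih d)

theorem parb_subst {M M' : Tm Loc Ch} (h : ParB M M') :
    ∀ (k : ℕ) {N N' : Tm Loc Ch}, ParB N N' → ParB (M.subst k N) (M'.subst k N') := by
  induction h with
  | var n =>
      intro k N N' hN
      simp only [Tm.subst]
      split_ifs
      · exact hN
      · exact ParB.var n
      · exact ParB.var (n - 1)
  | choice i => intro k N N' hN; exact ParB.choice i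
  | push a _ _ ihN ihM => intro k N N' hN; exact ParB.push a (ihN k hN) (ihM k hN)
  | pop a _ ih => intro k N N' hN; exact ParB.pop a (ih (k + 1) (parb_lift hN 0))
  | caseOf i _ _ ihM ihN => intro k N N' hN; exact ParB.caseOf i (ihM k hN) (ihN k hN)
  | loop i _ ih => intro k N N' hN; exact ParB.loop i (ih k hN)
  | @beta A A' a B B' _ _ ihA ihB =>
      intro k N N' hN
      simp only [Tm.subst]
      rw [Tm.subst_subst B' A' N' (Nat.zero_le k)]
      exact ParB.beta a (ihA k hN) (ihB (k + 1) (parb_lift hN 0))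
  | unroll i _ ih =>
      intro k N N' hN
      simp only [Tm.subst]
      exact ParB.unroll i (ih k hN)

open Classical in
/-- Takahashi's complete development for beta/unroll. -/
noncomputable def cb : Tm Loc Ch → Tm Loc Ch
  | .var n => .var n
  | .choice i => .choice i
  | .pop a M => .pop a (cb M)
  | .caseOf X i K => .caseOf (cb X) i (cb K)
  | .loop M i => .caseOf (cb M) i (.loop (cb M) i)
  | .push N a (.pop b M) =>
      if a = b then (cb M).subst 0 (cb N) else .push (cb N) a (.pop b (cb M))
  | .push N a (.var m) => .push (cb N) a (cb (Tm.var m : Tm Loc Ch))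
  | .push N a (.push P c X) => .push (cb N) a (cb (Tm.push P c X))
  | .push N a (.choice i) => .push (cb N) a (cb (Tm.choice i : Tm Loc Ch))
  | .push N a (.caseOf X i K) => .push (cb N) a (cb (Tm.caseOf X i K))
  | .push N a (.loop M i) => .push (cb N) a (cb (Tm.loop M i))

theorem parb_cb {M N : Tm Loc Ch} (h : ParB M N) : ParB N (cb M) := by
  induction h with
  | var n => exact ParB.var n
  | choice i => exact ParB.choice i
  | @push N N' a X X' hN hX ihN ihX =>
      cases X with
      | pop b M =>
          by_cases hab : a = b
          · subst hab
            cases hX with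
            | pop _ hM =>
                simp only [cb, if_pos rfl]
                cases ihX with
                | pop _ hM' => exact ParB.beta a ihN hM'
          · cases hX with
            | pop _ hM =>
                simp only [cb, if_neg hab]
                cases ihX with
                | pop _ hM' => exact ParB.push a ihN (ParB.pop b hM')
      | var m => simp only [cb]; exact ParB.push a ihN ihX
      | push P c Y => simp only [cb]; exact ParB.push a ihN ihX
      | choice i => simp only [cb]; exact ParB.push a ihN ihX
      | caseOf Y i K => simp only [cb]; exact ParB.push a ihN ihX
      | loop Y i => simp only [cb]; exact ParB.push a ihN ihX
  | pop a _ ih => exact ParB.pop a ih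
  | caseOf i _ _ ihM ihN => exact ParB.caseOf i ihM ihN
  | loop i _ ih => exact ParB.unroll i ih
  | @beta N N' a M M' hN hM ihN ihM =>
      simp only [cb, if_pos rfl]
      exact parb_subst ihM 0 ihN
  | unroll i _ ih =>
      simp only [cb]
      exact ParB.caseOf i ih (ParB.loop i ih)

theorem parb_red {M N : Tm Loc Ch} (h : ParB M N) : ReflTransGen Step M N := by
  induction h with
  | var n => exact ReflTransGen.refl
  | choice i => exact ReflTransGen.refl
  | push a _ _ ihN ihM => exact red_push a ihN ihM
  | pop a _ ih => exact red_pop a ih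
  | caseOf i _ _ ihM ihN => exact red_case i ihM ihN
  | loop i _ ih => exact red_loop i ih
  | @beta N N' a M M' _ _ ihN ihM =>
      exact (red_push a ihN (red_pop a ihM)).trans
        (ReflTransGen.single (Step.beta N' a M'))
  | @unroll M M' i _ ih =>
      exact (red_loop i ih).trans (ReflTransGen.single (Step.unroll M' i))

theorem bstep_parb {M N : Tm Loc Ch} (h : BStep M N) : ParB M N := by
  induction h with
  | beta N a M => exact ParB.beta a (ParB.refl N) (ParB.refl M)
  | unroll M i => exact ParB.unroll i (ParB.refl M)
  | push_left _ _ a M _ ih => exact ParB.push a ih (ParB.refl M)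
  | push_right N a _ _ _ ih => exact ParB.push a (ParB.refl N) ih
  | pop_body a _ _ _ ih => exact ParB.pop a ih
  | case_left _ _ i N _ ih => exact ParB.caseOf i ih (ParB.refl N)
  | case_right M i _ _ _ ih => exact ParB.caseOf i (ParB.refl M) ih
  | loop_body _ _ i _ ih => exact ParB.loop i ih

/-! ### Projection of parallel steps through structural normalization -/

theorem PP (a : Loc) (x : Tm Loc Ch) : ∀ (n n' x' : Tm Loc Ch), ParB n n' → ParB x x' →
    ∃ W, ParB (spush n a x) W ∧ s W = spush (s n') a (s x') := by
  induction x with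
  | pop b y ih =>
      intro n n' x' hn hx
      by_cases hab : a = b
      · refine ⟨.push n' a x', ?_, ?_⟩
        · simp only [spush, if_pos hab]
          exact ParB.push a hn hx
        · simp only [s]
      · cases hx with
        | pop _ hy =>
          rename_i y'
          obtain ⟨W0, hW0, hs0⟩ := ih (n.lift 0) (n'.lift 0) y' (parb_lift hn 0) hy
          refine ⟨.pop b W0, ?_, ?_⟩
          · simp only [spush, if_neg hab]
            exact ParB.pop b hW0
          · simp only [s, spush, if_neg hab, hs0]
            rw [← s_lift]
  | var m =>
      intro n n' x' hn hx
      exact ⟨.push n' a x', by simp only [spush]; exact ParB.push a hn hx, by simp only [s]⟩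
  | push p c y ihp ihy =>
      intro n n' x' hn hx
      exact ⟨.push n' a x', by simp only [spush]; exact ParB.push a hn hx, by simp only [s]⟩
  | choice j =>
      intro n n' x' hn hx
      exact ⟨.push n' a x', by simp only [spush]; exact ParB.push a hn hx, by simp only [s]⟩
  | caseOf p j y ihp ihy =>
      intro n n' x' hn hx
      exact ⟨.push n' a x', by simp only [spush]; exact ParB.push a hn hx, by simp only [s]⟩
  | loop m j ih =>
      intro n n' x' hn hx
      exact ⟨.push n' a x', by simp only [spush]; exact ParB.push a hn hx, by simp only [s]⟩

theorem PC (i : Ch) (x : Tm Loc Ch) : ∀ (x' k k' : Tm Loc Ch), ParB x x' → ParB k k' →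
    ∃ W, ParB (scase x i k) W ∧ s W = scase (s x') i (s k') := by
  induction x with
  | var n =>
      intro x' k k' hx hk
      cases hx
      exact ⟨.caseOf (.var n) i k',
        by simp only [scase]; exact ParB.caseOf i (ParB.var n) hk,
        by simp only [s, scase]⟩
  | choice j =>
      intro x' k k' hx hk
      cases hx
      by_cases hji : j = i
      · refine ⟨k', ?_, ?_⟩
        · simp only [scase, if_pos hji]; exact hk
        · simp only [s, scase, if_pos hji]
      · refine ⟨.choice j, ?_, ?_⟩
        · simp only [scase, if_neg hji]; exact ParB.choice j
        · simp only [s, scase, if_neg hji]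
  | loop m c ihm =>
      intro x' k k' hx hk
      refine ⟨.caseOf x' i k', ?_, ?_⟩
      · simp only [scase]; exact ParB.caseOf i hx hk
      · simp only [s]
  | pop b y ihy =>
      intro x' k k' hx hk
      cases hx with
      | pop _ hy =>
        rename_i y'
        obtain ⟨W0, hW0, hs0⟩ := ihy y' (k.lift 0) (k'.lift 0) hy (parb_lift hk 0)
        refine ⟨.pop b W0, ?_, ?_⟩
        · simp only [scase]; exact ParB.pop b hW0
        · simp only [s, scase, hs0]
          rw [← s_lift]
  | caseOf p j y ihp ihy =>
      intro x' k k' hx hk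
      cases hx with
      | @caseOf _ p' _ _ y' hp hy =>
        by_cases hji : j = i
        · obtain ⟨W0, hW0, hs0⟩ := ihy y' k k' hy hk
          refine ⟨.caseOf p' i W0, ?_, ?_⟩
          · simp only [scase, if_pos hji]
            exact ParB.caseOf i hp hW0
          · simp only [s, hs0]
            rw [hji, scase_assoc]
        · refine ⟨.caseOf (.caseOf p' j y') i k', ?_, ?_⟩
          · simp only [scase, if_neg hji]
            exact ParB.caseOf i (ParB.caseOf j hp hy) hk
          · simp only [s]
  | push p c y ihp ihy =>
      intro x' k k' hx hk
      cases hx with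
      | @push _ p' _ _ y' hp hy =>
          obtain ⟨W0, hW0, hs0⟩ := ihy y' k k' hy hk
          obtain ⟨W, hW, hsW⟩ := PP c (scase y i k) p p' W0 hp hW0
          refine ⟨W, ?_, ?_⟩
          · simp only [scase]; exact hW
          · rw [hsW, hs0]
            simp only [s]
            rw [scase_spush]
      | @beta _ p' _ m m' hp hm =>
          obtain ⟨W1, hW1, hs1⟩ := ihy (.pop c m') k k' (ParB.pop c hm) hk
          rw [show scase (.pop c m) i k = Tm.pop c (scase m i (k.lift 0)) from by
            simp only [scase]] at hW1
          cases hW1 with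
          | pop _ hW0 =>
            rename_i W0
            have hs0 : s W0 = scase (s m') i ((s k').lift 0) := by
              simp only [s, scase, Tm.pop.injEq, true_and, ← s_lift] at hs1
              exact hs1
            refine ⟨W0.subst 0 p', ?_, ?_⟩
            · have : scase (Tm.push p c (.pop c m)) i k
                  = Tm.push p c (.pop c (scase m i (k.lift 0))) := by
                simp [scase, spush]
              rw [this]
              exact ParB.beta c hp hW0
            · have e1 : s (W0.subst 0 p') = s ((scase (s m') i ((s k').lift 0)).subst 0 (s p')) := by
                rw [s_subst, hs0]
              have e2 : s ((scase (s m') i ((s k').lift 0)).subst 0 (s p'))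
                  = s ((Tm.caseOf (s m') i ((s k').lift 0)).subst 0 (s p')) := by
                refine (s_sred (sred_subst_left ?_ 0 (s p'))).symm
                exact case_to_scase i (s m') ((s k').lift 0)
              have e3 : (Tm.caseOf (s m') i ((s k').lift 0)).subst 0 (s p')
                  = Tm.caseOf ((s m').subst 0 (s p')) i (s k') := by
                simp only [Tm.subst]
                rw [Tm.subst_lift]
              have e4 : s (Tm.caseOf ((s m').subst 0 (s p')) i (s k'))
                  = scase (s ((s m').subst 0 (s p'))) i (s (s k')) := by
                simp only [s]
              rw [e1, e2, e3, e4, s_idem, ← s_subst]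

theorem P1 {u w : Tm Loc Ch} (h : ParB u w) : ∃ W, ParB (s u) W ∧ s W = s w := by
  induction h with
  | var n => exact ⟨.var n, ParB.var n, rfl⟩
  | choice i => exact ⟨.choice i, ParB.choice i, rfl⟩
  | @pop a M M' _ ih =>
      obtain ⟨W0, hW0, hs0⟩ := ih
      exact ⟨.pop a W0, by simp only [s]; exact ParB.pop a hW0, by simp only [s, hs0]⟩
  | @loop M M' i _ ih =>
      obtain ⟨W0, hW0, hs0⟩ := ih
      exact ⟨.loop W0 i, by simp only [s]; exact ParB.loop i hW0, by simp only [s, hs0]⟩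
  | @unroll M M' i _ ih =>
      obtain ⟨W0, hW0, hs0⟩ := ih
      refine ⟨.caseOf W0 i (.loop W0 i), ?_, ?_⟩
      · simp only [s]; exact ParB.unroll i hW0
      · simp only [s, hs0]
  | @push N N' a X X' _ _ ihN ihX =>
      obtain ⟨Wn, hWn, hsn⟩ := ihN
      obtain ⟨Wx, hWx, hsx⟩ := ihX
      obtain ⟨W, hW, hsW⟩ := PP a (s X) (s N) Wn Wx hWn hWx
      refine ⟨W, by simp only [s]; exact hW, ?_⟩
      rw [hsW, hsn, hsx]
      simp only [s]
  | @caseOf X X' i K K' _ _ ihX ihK =>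
      obtain ⟨Wx, hWx, hsx⟩ := ihX
      obtain ⟨Wk, hWk, hsk⟩ := ihK
      obtain ⟨W, hW, hsW⟩ := PC i (s X) Wx (s K) Wk hWx hWk
      refine ⟨W, by simp only [s]; exact hW, ?_⟩
      rw [hsW, hsx, hsk]
      simp only [s]
  | @beta N N' a M M' _ _ ihN ihM =>
      obtain ⟨Wn, hWn, hsn⟩ := ihN
      obtain ⟨Wm, hWm, hsm⟩ := ihM
      refine ⟨Wm.subst 0 Wn, ?_, ?_⟩
      · have : s (Tm.push N a (.pop a M)) = Tm.push (s N) a (.pop a (s M)) := by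
          simp [s, spush]
        rw [this]
        exact ParB.beta a hWn hWm
      · rw [s_subst Wm Wn 0, hsm, hsn, ← s_subst]

/-! ### The projected relation and confluence -/

def TRel (u v : Tm Loc Ch) : Prop := ∃ w, ParB u w ∧ v = s w

theorem trel_diamond (a b c : Tm Loc Ch) (h1 : TRel a b) (h2 : TRel a c) :
    ∃ d, TRel b d ∧ TRel c d := by
  obtain ⟨w1, hw1, rfl⟩ := h1
  obtain ⟨w2, hw2, rfl⟩ := h2
  obtain ⟨W1, hW1, hs1⟩ := P1 (parb_cb hw1)
  obtain ⟨W2, hW2, hs2⟩ := P1 (parb_cb hw2)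
  exact ⟨s (cb a), ⟨W1, hW1, hs1.symm⟩, ⟨W2, hW2, hs2.symm⟩⟩

theorem step_trel {u v : Tm Loc Ch} (h : Step u v) :
    ReflTransGen (TRel (Loc := Loc) (Ch := Ch)) (s u) (s v) := by
  rcases step_classify h with hs | hb
  · rw [s_sstep hs]
  · obtain ⟨W, hW, hsW⟩ := P1 (bstep_parb hb)
    exact ReflTransGen.single ⟨W, hW, hsW.symm⟩

theorem red_trel {u v : Tm Loc Ch} (h : ReflTransGen Step u v) :
    ReflTransGen (TRel (Loc := Loc) (Ch := Ch)) (s u) (s v) := by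
  induction h with
  | refl => exact ReflTransGen.refl
  | tail _ h2 ih => exact ih.trans (step_trel h2)

theorem trel_red {u v : Tm Loc Ch} (h : TRel u v) : ReflTransGen Step u v := by
  obtain ⟨w, hw, rfl⟩ := h
  exact (parb_red hw).trans (sred_red (toS w))

theorem trelstar_red {u v : Tm Loc Ch}
    (h : ReflTransGen (TRel (Loc := Loc) (Ch := Ch)) u v) : ReflTransGen Step u v := by
  induction h with
  | refl => exact ReflTransGen.refl
  | tail _ h2 ih => exact ih.trans (trel_red h2)

/-- Confluence of reduction on FMC terms. -/
theorem fmc_confluence (M N P : Tm Loc Ch)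
    (h1 : Relation.ReflTransGen Step M N) (h2 : Relation.ReflTransGen Step M P) :
    ∃ Q : Tm Loc Ch, Relation.ReflTransGen Step N Q ∧ Relation.ReflTransGen Step P Q := by
  obtain ⟨Q, hQ1, hQ2⟩ := Relation.church_rosser
    (fun a b c hab hac => by
      obtain ⟨d, hd1, hd2⟩ := trel_diamond a b c hab hac
      exact ⟨d, Relation.ReflGen.single hd1, ReflTransGen.single hd2⟩)
    (red_trel h1) (red_trel h2)
  exact ⟨Q, (sred_red (toS N)).trans (trelstar_red hQ1),
    (sred_red (toS P)).trans (trelstar_red hQ2)⟩
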